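/- Let λ < ρ be reals and G : ℝ → ℝ a continuous function. Define F : ℝ → ℝ by F(v) = min_{r ∈ [λ,ρ]} (G(r) − v·r) (the minimum exists by compactness and continuity). Let h : ℝ → ℝ be any function such that for every v ∈ ℝ, h(v) ∈ [λ, ρ] and G(h(v)) − v·h(v) ≤ G(r) − v·r for all r ∈ [λ, ρ]. Then for all v ≤ w, h is Lebesgue-integrable on [v, w] (it agrees outside a countable set with a measurable function) and F(w) − F(v) = − ∫_v^w h(x) dx. -/

import Mathlib

open MeasureTheory intervalIntegral

/-- If `F v = min_{r ∈ [lam, rho]} (G r - v r)` and `h` is a selection of minimizers,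
then `h` is interval-integrable and `F w - F v = -∫_v^w h(x) dx` for `v ≤ w`. -/
theorem derivative_of_min_is_minus_minimizer
    (lam rho : ℝ) (hlr : lam < rho) (G : ℝ → ℝ) (hG : Continuous G)
    (F : ℝ → ℝ)
    (hF : ∀ v : ℝ, IsLeast ((fun r => G r - v * r) '' Set.Icc lam rho) (F v))
    (h : ℝ → ℝ)
    (hmem : ∀ v : ℝ, h v ∈ Set.Icc lam rho)
    (hmin : ∀ v : ℝ, ∀ r ∈ Set.Icc lam rho, G (h v) - v * h v ≤ G r - v * r) :
    ∀ v w : ℝ, v ≤ w →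
      IntervalIntegrable h volume v w ∧ F w - F v = - ∫ x in v..w, h x := by
  -- the value of F
  have hFval : ∀ v : ℝ, F v = G (h v) - v * h v := by
    intro v
    obtain ⟨⟨r0, hr0, hr0eq⟩, hlb⟩ := hF v
    have h1 : F v ≤ G (h v) - v * h v := hlb ⟨h v, hmem v, rfl⟩
    have h2 : G (h v) - v * h v ≤ F v := by
      rw [← hr0eq]; exact hmin v r0 hr0
    linarith
  -- key inequality: F b - F a ≤ -((b - a) * h a) for all a, b
  have key : ∀ a b : ℝ, F b - F a ≤ -((b - a) * h a) := by
    intro a b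
    have h1 : F b ≤ G (h a) - b * h a := (hF b).2 ⟨h a, hmem a, rfl⟩
    have h2 := hFval a
    nlinarith
  -- h is monotone
  have hmono : Monotone h := by
    intro a b hab
    rcases eq_or_lt_of_le hab with rfl | hab
    · exact le_rfl
    by_contra hc
    push_neg at hc
    have h1 := hmin a (h b) (hmem b)
    have h2 := hmin b (h a) (hmem a)
    nlinarith [mul_pos (sub_pos.2 hab) (sub_pos.2 hc)]
  -- the right-limit function g
  set g : ℝ → ℝ := fun x => sInf (h '' Set.Ioi x) with hgdef
  have htends : ∀ x : ℝ, Filter.Tendsto h (nhdsWithin x (Set.Ioi x)) (nhds (g x)) :=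
    fun x => hmono.tendsto_nhdsGT x
  have hbdd : ∀ x : ℝ, BddBelow (h '' Set.Ioi x) := by
    intro x
    exact ⟨lam, fun y ⟨u, _, huy⟩ => huy ▸ (hmem u).1⟩
  have hne : ∀ x : ℝ, (h '' Set.Ioi x).Nonempty := fun x =>
    ⟨h (x + 1), ⟨x + 1, by simp, rfl⟩⟩
  have hge : ∀ x u : ℝ, x < u → g x ≤ h u := fun x u hu =>
    csInf_le (hbdd x) ⟨u, hu, rfl⟩
  have hle : ∀ x : ℝ, h x ≤ g x := by
    intro x
    refine le_csInf (hne x) ?_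
    rintro y ⟨u, hu, rfl⟩
    exact hmono (le_of_lt hu)
  have gmono : Monotone g := by
    intro a b hab
    exact csInf_le_csInf (hbdd a) (hne b)
      (Set.image_mono (Set.Ioi_subset_Ioi hab))
  -- g = h at continuity points of h, hence a.e.
  have hae : h =ᵐ[volume] g := by
    have hcount : {x : ℝ | ¬ContinuousAt h x}.Countable :=
      hmono.countable_not_continuousAt
    have hsub : {x : ℝ | h x ≠ g x} ⊆ {x : ℝ | ¬ContinuousAt h x} := by
      intro x hx
      simp only [Set.mem_setOf_eq] at hx ⊢
      intro hcont
      apply hx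
      have t1 : Filter.Tendsto h (nhdsWithin x (Set.Ioi x)) (nhds (h x)) :=
        (hcont.continuousWithinAt).tendsto
      exact tendsto_nhds_unique t1 (htends x)
    have : volume {x : ℝ | h x ≠ g x} = 0 :=
      measure_mono_null hsub (Set.Countable.measure_zero hcount _)
    exact this
  -- second key inequality, with the right limit: F w - F x ≤ -((w - x) * g x)
  have key2 : ∀ x w : ℝ, x < w → F w - F x ≤ -((w - x) * g x) := by
    intro x w hxw
    have hlim : Filter.Tendsto (fun u => -((w - u) * h u) + -((u - x) * h x))
        (nhdsWithin x (Set.Ioi x)) (nhds (-((w - x) * g x) + -((x - x) * h x))) := by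
      apply Filter.Tendsto.add
      · exact (Filter.Tendsto.mul
          ((continuous_const.sub continuous_id).continuousWithinAt)
          (htends x)).neg
      · exact (Filter.Tendsto.mul
          ((continuous_id.sub continuous_const).continuousWithinAt)
          tendsto_const_nhds).neg
    have hstep : ∀ᶠ u in nhdsWithin x (Set.Ioi x),
        F w - F x ≤ -((w - u) * h u) + -((u - x) * h x) := by
      filter_upwards [Ioo_mem_nhdsGT_of_mem (Set.mem_Ico.2 ⟨le_rfl, hxw⟩)] with u hu
      have k1 := key u w
      have k2 := key x u
      linarith
    have := ge_of_tendsto hlim hstep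
    simpa using this
  -- lower bound: -((w - x) * h w) ≤ F w - F x
  have key3 : ∀ x w : ℝ, -((w - x) * h w) ≤ F w - F x := by
    intro x w
    have := key w x
    nlinarith
  -- F has right derivative -(g x) at every x
  have hderiv : ∀ x : ℝ, HasDerivWithinAt F (-(g x)) (Set.Ioi x) x := by
    intro x
    rw [hasDerivWithinAt_iff_tendsto_slope]
    rw [Set.diff_singleton_eq_self (by simp : x ∉ Set.Ioi x)]
    have hlow : Filter.Tendsto (fun w => -(h w)) (nhdsWithin x (Set.Ioi x))
        (nhds (-(g x))) := (htends x).neg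
    refine tendsto_of_tendsto_of_tendsto_of_le_of_le' hlow tendsto_const_nhds ?_ ?_
    · filter_upwards [self_mem_nhdsWithin] with w hw
      have hxw : x < w := hw
      rw [slope_def_field, le_div_iff₀ (sub_pos.2 hxw)]
      nlinarith [key3 x w]
    · filter_upwards [self_mem_nhdsWithin] with w hw
      have hxw : x < w := hw
      rw [slope_def_field, div_le_iff₀ (sub_pos.2 hxw)]
      nlinarith [key2 x w hxw]
  -- F is Lipschitz, hence continuous
  have hC0 : (0:ℝ) ≤ max |lam| |rho| := le_trans (abs_nonneg lam) (le_max_left _ _)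
  have habs : ∀ x : ℝ, |h x| ≤ max |lam| |rho| := by
    intro x
    rcases hmem x with ⟨h1, h2⟩
    rw [abs_le]
    refine ⟨?_, ?_⟩
    · have := neg_abs_le lam
      have := le_max_left |lam| |rho|
      linarith
    · have := le_abs_self rho
      have := le_max_right |lam| |rho|
      linarith
  have hlipkey : ∀ a b : ℝ, a ≤ b → |F b - F a| ≤ max |lam| |rho| * (b - a) := by
    intro a b hab
    have k1 := key a b
    have k2 := key3 a b
    have ha := abs_le.1 (habs a)
    have hb := abs_le.1 (habs b)
    rw [abs_le]
    constructor
    · nlinarith [mul_le_mul_of_nonneg_left hb.2 (sub_nonneg.2 hab)]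
    · nlinarith [mul_le_mul_of_nonneg_left ha.1 (sub_nonneg.2 hab)]
  have hlip : LipschitzWith ⟨max |lam| |rho|, hC0⟩ F := by
    apply LipschitzWith.of_dist_le_mul
    intro a b
    rw [Real.dist_eq, Real.dist_eq]
    rcases le_total a b with hab | hab
    · rw [abs_sub_comm (F a) (F b), abs_sub_comm a b, abs_of_nonneg (sub_nonneg.2 hab)]
      exact hlipkey a b hab
    · rw [abs_of_nonneg (sub_nonneg.2 hab)]
      exact hlipkey b a hab
  have hFcont : Continuous F := hlip.continuous
  intro v w hvw
  have hint_h : IntervalIntegrable h volume v w := hmono.intervalIntegrable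
  refine ⟨hint_h, ?_⟩
  have hint_g : IntervalIntegrable g volume v w := gmono.intervalIntegrable
  have hftc : ∫ x in v..w, -(g x) = F w - F v :=
    intervalIntegral.integral_eq_sub_of_hasDeriv_right_of_le hvw
      hFcont.continuousOn (fun x _ => hderiv x) hint_g.neg
  have h1 : ∫ x in v..w, -(g x) = -∫ x in v..w, g x := intervalIntegral.integral_neg
  have h2 : ∫ x in v..w, g x = ∫ x in v..w, h x := by
    apply intervalIntegral.integral_congr_ae
    filter_upwards [hae] with x hx _
    exact hx.symm
  rw [← h2]
  linarith
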